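/- Let d and n be positive integers and let d' be the square-free part of d/gcd(d,n). Suppose a is an integer such that a + k·n is invertible modulo d for some integer k (equivalently, gcd(a, gcd(n,d)) = 1). Then there exists k with 0 ≤ k < g(d') such that a + k·n is invertible modulo d, where g denotes the Jacobsthal function. -/

import Mathlib

/-- The Jacobsthal function `g(m)`: the smallest `M` such that every sequence of `M`
consecutive integers contains an integer coprime to `m`. -/
noncomputable def jacobsthal (m : ℕ) : ℕ :=
  sInf {M : ℕ | ∀ a : ℤ, ∃ k : ℕ, k < M ∧ IsCoprime (a + (k : ℤ)) (m : ℤ)}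

/-- The squarefree kernel (radical) of a natural number: the product of its distinct
prime divisors. -/
def squarefreeKernel (m : ℕ) : ℕ := ∏ p ∈ m.primeFactors, p

lemma jac_mem (m : ℕ) (hm : 0 < m) :
    m ∈ {M : ℕ | ∀ a : ℤ, ∃ k : ℕ, k < M ∧ IsCoprime (a + (k : ℤ)) (m : ℤ)} := by
  intro a
  have hm' : (0:ℤ) < (m:ℤ) := by exact_mod_cast hm
  have h0 : 0 ≤ (1 - a) % (m:ℤ) := Int.emod_nonneg _ (by positivity)
  have h1 : (1 - a) % (m:ℤ) < (m:ℤ) := Int.emod_lt_of_pos _ hm'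
  have htn : (((1 - a) % (m:ℤ)).toNat : ℤ) = (1 - a) % (m:ℤ) := Int.toNat_of_nonneg h0
  refine ⟨((1 - a) % (m:ℤ)).toNat, ?_, ?_⟩
  · have : ((((1 - a) % (m:ℤ)).toNat : ℤ)) < (m:ℤ) := by rw [htn]; exact h1
    exact_mod_cast this
  · have heq : a + (((1 - a) % (m:ℤ)).toNat : ℤ) = 1 + (m:ℤ) * (-((1 - a) / (m:ℤ))) := by
      rw [htn, Int.emod_def]; ring
    rw [heq]
    exact (isCoprime_one_left).add_mul_left_left _

lemma jacobsthal_spec (m : ℕ) (hm : 0 < m) (a : ℤ) :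
    ∃ k : ℕ, k < jacobsthal m ∧ IsCoprime (a + (k : ℤ)) (m : ℤ) :=
  Nat.sInf_mem ⟨m, jac_mem m hm⟩ a

theorem exists_small_coprime_shift
    (d n : ℕ) (hd : 0 < d) (hn : 0 < n) (a : ℤ)
    (h : ∃ k : ℤ, IsCoprime (a + k * (n : ℤ)) (d : ℤ)) :
    ∃ k : ℕ, k < jacobsthal (squarefreeKernel (d / d.gcd n)) ∧
      IsCoprime (a + (k : ℤ) * (n : ℤ)) (d : ℤ) := by
  set g := d.gcd n with hgdef
  have hgd : g ∣ d := Nat.gcd_dvd_left d n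
  have hgn : g ∣ n := Nat.gcd_dvd_right d n
  have hg0 : 0 < g := Nat.gcd_pos_of_pos_left n hd
  set m1 := d / g with hm1def
  have hm1 : 0 < m1 := Nat.div_pos (Nat.le_of_dvd hd hgd) hg0
  set d' := squarefreeKernel m1 with hd'def
  have hd'pos : 0 < d' := by
    apply Finset.prod_pos
    intro p hp
    exact (Nat.prime_of_mem_primeFactors hp).pos
  set s := d.primeFactors.filter (fun p => ¬ p ∣ n) with hsdef
  set d'' := ∏ p ∈ s, p with hd''def
  -- s ⊆ primeFactors of m1
  have hsub : s ⊆ m1.primeFactors := by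
    intro p hp
    rw [hsdef, Finset.mem_filter] at hp
    obtain ⟨hpf, hpn⟩ := hp
    have pp := Nat.prime_of_mem_primeFactors hpf
    have pd : p ∣ d := Nat.dvd_of_mem_primeFactors hpf
    have hpg : ¬ p ∣ g := fun hpg => hpn (hpg.trans hgn)
    have hdm : m1 * g = d := Nat.div_mul_cancel hgd
    have hpm1 : p ∣ m1 := by
      rcases (Nat.Prime.dvd_mul pp).mp (hdm ▸ pd) with h1 | h1
      · exact h1
      · exact absurd h1 hpg
    exact Nat.mem_primeFactors.mpr ⟨pp, hpm1, hm1.ne'⟩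
  have hdvd : d'' ∣ d' := Finset.prod_dvd_prod_of_subset _ _ _ hsub
  -- n coprime to d''
  have hncop : Nat.Coprime n d'' := by
    apply Nat.Coprime.prod_right
    intro p hp
    rw [hsdef, Finset.mem_filter] at hp
    exact ((Nat.prime_of_mem_primeFactors hp.1).coprime_iff_not_dvd.mpr hp.2).symm
  have hncopZ : IsCoprime (n : ℤ) (d'' : ℤ) := Nat.isCoprime_iff_coprime.mpr hncop
  obtain ⟨u, v, huv⟩ := id hncopZ
  -- Jacobsthal spec
  obtain ⟨k, hk, hco⟩ := jacobsthal_spec d' hd'pos (u * a)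
  have hdvdZ : (d'' : ℤ) ∣ (d' : ℤ) := Int.natCast_dvd_natCast.mpr hdvd
  have hco'' : IsCoprime (u * a + (k : ℤ)) (d'' : ℤ) :=
    IsCoprime.of_isCoprime_of_dvd_right hco hdvdZ
  -- a + k*n coprime to d''
  have hkey : IsCoprime (a + (k : ℤ) * (n : ℤ)) (d'' : ℤ) := by
    have heq : a + (k : ℤ) * (n : ℤ)
        = (n : ℤ) * (u * a + (k : ℤ)) + (d'' : ℤ) * (v * a) := by
      have : (u * (n:ℤ) + v * (d'':ℤ)) * a = a := by rw [huv]; ring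
      linear_combination -this
    rw [heq]
    exact (hncopZ.mul_left hco'').add_mul_left_left _
  refine ⟨k, hk, ?_⟩
  -- conclude coprimality to d
  rw [Int.isCoprime_iff_gcd_eq_one]
  by_contra hq
  obtain ⟨p, pp, hpq⟩ := Nat.exists_prime_and_dvd hq
  have hpx : (p : ℤ) ∣ a + (k : ℤ) * (n : ℤ) :=
    (Int.natCast_dvd_natCast.mpr hpq).trans (Int.gcd_dvd_left _ _)
  have hpd : (p : ℤ) ∣ (d : ℤ) :=
    (Int.natCast_dvd_natCast.mpr hpq).trans (Int.gcd_dvd_right _ _)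
  have hpdN : p ∣ d := Int.natCast_dvd_natCast.mp hpd
  have hpunit : ¬ IsUnit (p : ℤ) := by
    rw [Int.isUnit_iff]
    have := pp.one_lt
    omega
  by_cases hpn : p ∣ n
  · have hpnZ : (p : ℤ) ∣ (n : ℤ) := Int.natCast_dvd_natCast.mpr hpn
    have hpa : (p : ℤ) ∣ a := by
      have := hpx.sub (hpnZ.mul_left (k : ℤ))
      simpa using this
    obtain ⟨k0, hk0⟩ := h
    exact hpunit (hk0.isUnit_of_dvd' (hpa.add (hpnZ.mul_left k0)) hpd)
  · have hps : p ∈ s := by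
      rw [hsdef, Finset.mem_filter]
      exact ⟨Nat.mem_primeFactors.mpr ⟨pp, hpdN, hd.ne'⟩, hpn⟩
    have hpd'' : (p : ℤ) ∣ (d'' : ℤ) :=
      Int.natCast_dvd_natCast.mpr (Finset.dvd_prod_of_mem _ hps)
    exact hpunit (hkey.isUnit_of_dvd' hpx hpd'')
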